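/- For all integers n ≥ 1 and k ≥ 1, |S(n,k) − (1 − e^{−n/k})^k| ≤ (n/k)·(1 + e^{−n/k})^{k−2}·e^{−n/k}·(k·e^{−n/k} + 1), where (1 + e^{−n/k})^{k−2} denotes a real power when k < 2. -/

import Mathlib

open Finset

/-- Key pointwise estimate: for `0 ≤ t ≤ 1`, `|(1-t)^n - e^{-tn}| ≤ n t² e^{-tn}`. -/
lemma key_est (n : ℕ) (t : ℝ) (ht0 : 0 ≤ t) (ht1 : t ≤ 1) :
    |(1 - t) ^ n - (Real.exp (-t)) ^ n| ≤ n * t ^ 2 * (Real.exp (-t)) ^ n := by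
  set a := Real.exp (-t) with ha
  have ha0 : (0:ℝ) ≤ a := (Real.exp_pos _).le
  have h1 : 1 - t ≤ a := by
    have := Real.add_one_le_exp (-t); linarith
  have hpow : (1 - t) ^ n ≤ a ^ n := pow_le_pow_left₀ (by linarith) h1 n
  rw [abs_sub_comm, abs_of_nonneg (sub_nonneg.2 hpow)]
  have hb : (1 : ℝ) - n * t ^ 2 ≤ (1 - t ^ 2) ^ n := by
    have h := one_add_mul_le_pow (a := -t ^ 2) (by nlinarith) n
    have e1 : (1 : ℝ) + -t ^ 2 = 1 - t ^ 2 := by ring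
    have e2 : (1 : ℝ) + (n : ℝ) * -t ^ 2 = 1 - n * t ^ 2 := by ring
    rw [e1, e2] at h; exact h
  have h2 : (1 + t) * a ≤ 1 := by
    have h := Real.add_one_le_exp t
    have h' : (1 + t) * a ≤ Real.exp t * a :=
      mul_le_mul_of_nonneg_right (by linarith) ha0
    have he : Real.exp t * a = 1 := by rw [ha, ← Real.exp_add]; simp
    linarith
  have h3 : (1 - t ^ 2) * a ≤ 1 - t := by
    have e : (1 - t ^ 2) * a = (1 - t) * ((1 + t) * a) := by ring
    rw [e]
    nlinarith [mul_nonneg (mul_nonneg (show (0:ℝ) ≤ 1 + t by linarith) ha0)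
      (show (0:ℝ) ≤ 1 - t by linarith)]
  have h4 : ((1 - t ^ 2) * a) ^ n ≤ (1 - t) ^ n :=
    pow_le_pow_left₀ (mul_nonneg (by nlinarith) ha0) h3 n
  have h5 : (1 - n * t ^ 2) * a ^ n ≤ (1 - t) ^ n := by
    calc (1 - n * t ^ 2) * a ^ n ≤ (1 - t ^ 2) ^ n * a ^ n :=
          mul_le_mul_of_nonneg_right hb (pow_nonneg ha0 n)
      _ = ((1 - t ^ 2) * a) ^ n := (mul_pow _ _ _).symm
      _ ≤ (1 - t) ^ n := h4
  nlinarith [h5]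

/-- `∑ C(m,i)·xⁱ = (1+x)^m`. -/
lemma sumA (m : ℕ) (x : ℝ) :
    ∑ i ∈ range (m + 1), (m.choose i : ℝ) * x ^ i = (1 + x) ^ m := by
  rw [add_comm (1:ℝ) x, add_pow]
  exact Finset.sum_congr rfl fun i _ => by ring

/-- `∑ C(m,i)·i·xⁱ = m·x·(1+x)^{m-1}`. -/
lemma sumB (m : ℕ) (x : ℝ) :
    ∑ i ∈ range (m + 1), (m.choose i : ℝ) * (i : ℝ) * x ^ i = m * x * (1 + x) ^ (m - 1) := by
  cases m with
  | zero => simp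
  | succ s =>
    rw [Finset.sum_range_succ' (fun i => (((s+1).choose i : ℝ)) * (i : ℝ) * x ^ i) (s+1)]
    have hterm : ∀ i ∈ range (s+1),
        (((s+1).choose (i+1) : ℝ)) * ((i+1 : ℕ) : ℝ) * x ^ (i+1)
          = ((s+1 : ℕ) : ℝ) * x * ((s.choose i : ℝ) * x ^ i) := by
      intro i _
      have h : (s+1) * s.choose i = (s+1).choose (i+1) * (i+1) := Nat.add_one_mul_choose_eq s i
      have hc : ((s+1).choose (i+1) : ℝ) * ((i+1 : ℕ) : ℝ) = ((s+1 : ℕ) : ℝ) * (s.choose i : ℝ) := by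
        exact_mod_cast congrArg (Nat.cast (R := ℝ)) h.symm
      have e : (((s+1).choose (i+1) : ℝ)) * ((i+1 : ℕ) : ℝ) * x ^ (i+1)
          = ((((s+1).choose (i+1) : ℝ)) * ((i+1 : ℕ) : ℝ)) * x ^ (i+1) := by ring
      rw [e, hc, pow_succ]; ring
    rw [Finset.sum_congr rfl hterm, ← Finset.mul_sum, sumA]
    simp [Nat.add_sub_cancel]

/-- `∑ C(m,i)·i²·xⁱ = m·x·((m-1)·x·(1+x)^{m-2} + (1+x)^{m-1})`. -/
lemma sumC (m : ℕ) (x : ℝ) (hm : 1 ≤ m) :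
    ∑ i ∈ range (m + 1), (m.choose i : ℝ) * (i : ℝ) ^ 2 * x ^ i
      = m * x * (((m - 1 : ℕ) : ℝ) * x * (1 + x) ^ (m - 2) + (1 + x) ^ (m - 1)) := by
  obtain ⟨s, rfl⟩ : ∃ s, m = s + 1 := ⟨m - 1, by omega⟩
  rw [Finset.sum_range_succ' (fun i => (((s+1).choose i : ℝ)) * (i : ℝ) ^ 2 * x ^ i) (s+1)]
  have hterm : ∀ i ∈ range (s+1),
      (((s+1).choose (i+1) : ℝ)) * ((i+1 : ℕ) : ℝ) ^ 2 * x ^ (i+1)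
        = ((s+1 : ℕ) : ℝ) * x * ((s.choose i : ℝ) * (i : ℝ) * x ^ i + (s.choose i : ℝ) * x ^ i) := by
    intro i _
    have h : (s+1) * s.choose i = (s+1).choose (i+1) * (i+1) := Nat.add_one_mul_choose_eq s i
    have hc : ((s+1).choose (i+1) : ℝ) * ((i+1 : ℕ) : ℝ) = ((s+1 : ℕ) : ℝ) * (s.choose i : ℝ) := by
      exact_mod_cast congrArg (Nat.cast (R := ℝ)) h.symm
    have e : (((s+1).choose (i+1) : ℝ)) * ((i+1 : ℕ) : ℝ) ^ 2 * x ^ (i+1)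
        = ((((s+1).choose (i+1) : ℝ)) * ((i+1 : ℕ) : ℝ)) * ((i+1 : ℕ) : ℝ) * x ^ (i+1) := by ring
    rw [e, hc, pow_succ]; push_cast; ring
  rw [Finset.sum_congr rfl hterm, ← Finset.mul_sum, Finset.sum_add_distrib, sumB, sumA]
  simp only [Nat.add_sub_cancel]
  push_cast
  ring_nf

/-- The closed form of the bounding sum equals the stated right-hand side. -/
lemma final_eq (n k : ℕ) (hk : 1 ≤ k) (x : ℝ) (hx : 0 < x) :
    ((n : ℝ) / k ^ 2) * ∑ j ∈ range (k + 1), (k.choose j : ℝ) * (j : ℝ) ^ 2 * x ^ j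
      = ((n : ℝ) / k) * (1 + x) ^ ((k : ℝ) - 2) * x * ((k : ℝ) * x + 1) := by
  have h1x : (0:ℝ) < 1 + x := by linarith
  rcases eq_or_lt_of_le hk with h1 | h2
  · obtain rfl : k = 1 := h1.symm
    rw [Finset.sum_range_succ, Finset.sum_range_succ]
    rw [show ((1:ℕ):ℝ) - 2 = -1 by norm_num, Real.rpow_neg_one]
    simp only [Finset.range_zero, Finset.sum_empty, Nat.choose_self, Nat.choose_zero_right]
    have h1x' : (1 + x) ≠ 0 := ne_of_gt h1x
    field_simp
    push_cast; ring
  · have h2' : 2 ≤ k := h2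
    rw [sumC k x hk]
    have hc : (k : ℝ) - 2 = ((k - 2 : ℕ) : ℝ) := by
      rw [Nat.cast_sub h2']; norm_num
    rw [hc, Real.rpow_natCast]
    have hk1 : k - 1 = (k - 2) + 1 := by omega
    rw [hk1, pow_succ]
    have hck : ((k - 2 + 1 : ℕ) : ℝ) = (k : ℝ) - 1 := by
      rw [Nat.cast_add, Nat.cast_sub h2']; push_cast; ring
    rw [hck]
    have hk0 : (k : ℝ) ≠ 0 := by positivity
    field_simp
    ring

/-- `S(n,k) = Stirling(n,k)·k!/kⁿ`, written via the sieve formula. -/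
noncomputable def Snk (n k : ℕ) : ℝ :=
  ∑ j ∈ Finset.range (k + 1), (k.choose j : ℝ) * (-1) ^ j * (1 - (j : ℝ) / k) ^ n

/-- main -/
theorem Snk_sub_pow_abs_le (n k : ℕ) (hn : 1 ≤ n) (hk : 1 ≤ k) :
    |Snk n k - (1 - Real.exp (-(n : ℝ) / k)) ^ k| ≤
      ((n : ℝ) / k) * (1 + Real.exp (-(n : ℝ) / k)) ^ ((k : ℝ) - 2) *
        Real.exp (-(n : ℝ) / k) * ((k : ℝ) * Real.exp (-(n : ℝ) / k) + 1) := by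
  have hk0 : (0:ℝ) < k := by exact_mod_cast hk
  set x := Real.exp (-(n : ℝ) / k) with hxdef
  have hx0 : 0 < x := Real.exp_pos _
  have hexp : (1 - x) ^ k = ∑ j ∈ range (k + 1), (k.choose j : ℝ) * (-1) ^ j * x ^ j := by
    rw [sub_eq_add_neg, add_comm, add_pow]
    refine Finset.sum_congr rfl fun j _ => ?_
    rw [neg_pow]; ring
  have hterm : ∀ j ∈ range (k + 1),
      |(k.choose j : ℝ) * (-1) ^ j * (1 - (j : ℝ) / k) ^ n - (k.choose j : ℝ) * (-1) ^ j * x ^ j|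
        ≤ (k.choose j : ℝ) * ((n : ℝ) * ((j : ℝ) / k) ^ 2 * x ^ j) := by
    intro j hj
    have hjk : (j : ℝ) ≤ k := by exact_mod_cast Finset.mem_range_succ_iff.mp hj
    have ht0 : 0 ≤ (j : ℝ) / k := by positivity
    have ht1 : (j : ℝ) / k ≤ 1 := by rw [div_le_one hk0]; exact hjk
    have hxj : x ^ j = (Real.exp (-((j : ℝ) / k))) ^ n := by
      rw [hxdef, ← Real.exp_nat_mul, ← Real.exp_nat_mul]
      congr 1; ring
    calc |(k.choose j : ℝ) * (-1) ^ j * (1 - (j : ℝ) / k) ^ n - (k.choose j : ℝ) * (-1) ^ j * x ^ j|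
        = (k.choose j : ℝ) * |(1 - (j : ℝ) / k) ^ n - (Real.exp (-((j : ℝ) / k))) ^ n| := by
          rw [hxj, show (k.choose j : ℝ) * (-1) ^ j * (1 - (j : ℝ) / k) ^ n
              - (k.choose j : ℝ) * (-1) ^ j * (Real.exp (-((j : ℝ) / k))) ^ n
            = (k.choose j : ℝ) * (-1) ^ j
              * ((1 - (j : ℝ) / k) ^ n - (Real.exp (-((j : ℝ) / k))) ^ n) from by ring,
            abs_mul, abs_mul, abs_pow, abs_neg, abs_one, one_pow, mul_one,
            Nat.abs_cast]
      _ ≤ (k.choose j : ℝ) * ((n : ℝ) * ((j : ℝ) / k) ^ 2 * (Real.exp (-((j : ℝ) / k))) ^ n) :=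
          mul_le_mul_of_nonneg_left (key_est n _ ht0 ht1) (Nat.cast_nonneg _)
      _ = (k.choose j : ℝ) * ((n : ℝ) * ((j : ℝ) / k) ^ 2 * x ^ j) := by rw [← hxj]
  calc |Snk n k - (1 - x) ^ k|
      = |∑ j ∈ range (k + 1), ((k.choose j : ℝ) * (-1) ^ j * (1 - (j : ℝ) / k) ^ n
          - (k.choose j : ℝ) * (-1) ^ j * x ^ j)| := by
        rw [Snk, hexp, Finset.sum_sub_distrib]
    _ ≤ ∑ j ∈ range (k + 1), |(k.choose j : ℝ) * (-1) ^ j * (1 - (j : ℝ) / k) ^ n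
          - (k.choose j : ℝ) * (-1) ^ j * x ^ j| := Finset.abs_sum_le_sum_abs _ _
    _ ≤ ∑ j ∈ range (k + 1), (k.choose j : ℝ) * ((n : ℝ) * ((j : ℝ) / k) ^ 2 * x ^ j) :=
        Finset.sum_le_sum hterm
    _ = ((n : ℝ) / k ^ 2) * ∑ j ∈ range (k + 1), (k.choose j : ℝ) * (j : ℝ) ^ 2 * x ^ j := by
        rw [Finset.mul_sum]
        refine Finset.sum_congr rfl fun j _ => ?_
        field_simp
    _ = ((n : ℝ) / k) * (1 + x) ^ ((k : ℝ) - 2) * x * ((k : ℝ) * x + 1) :=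
        final_eq n k hk x hx0
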